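/- Let J_{2N} = [[0, I_N], [−I_N, 0]] and let H ∈ ℝ^{2N×2N} be J_{2N}-Hamiltonian. Then there exists a Lagrangian subspace L ⊆ ℝ^{2N} invariant under H if and only if there exists a J_{2N}-symplectic matrix W such that the column space of W·[I_N; 0_N] equals L and W⁻¹HW has the Hamiltonian block-triangular form [[R, D], [0, −Rᵀ]] for some R, D ∈ ℝ^{N×N}. -/

import Mathlib

open Matrix

/-- The standard symplectic matrix `J_{2N} = [[0, I], [-I, 0]]`. -/
noncomputable def stdJ (N : ℕ) : Matrix (Fin N ⊕ Fin N) (Fin N ⊕ Fin N) ℝ :=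
  Matrix.fromBlocks 0 1 (-1) 0

/-- The `2N × N` matrix `[I_N; 0_N]`. -/
noncomputable def colI (N : ℕ) : Matrix (Fin N ⊕ Fin N) (Fin N) ℝ :=
  Matrix.fromRows 1 0

section aux
variable {N : ℕ}

lemma stdJ_transpose (N : ℕ) : (stdJ N)ᵀ = -(stdJ N) := by
  simp [stdJ, fromBlocks_transpose, Matrix.fromBlocks_neg]

lemma stdJ_mul_stdJ (N : ℕ) : stdJ N * stdJ N = -1 := by
  have h : stdJ N * stdJ N = fromBlocks (-1) 0 0 (-1) := by
    simp [stdJ, fromBlocks_multiply]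
  rw [h, show (fromBlocks (-1) 0 0 (-1) : Matrix (Fin N ⊕ Fin N) (Fin N ⊕ Fin N) ℝ)
      = -(fromBlocks 1 0 0 1) by rw [Matrix.fromBlocks_neg]; simp, fromBlocks_one]

lemma stdJ_isUnit (N : ℕ) : IsUnit (stdJ N) :=
  (Matrix.isUnit_iff_isUnit_det _).mpr
    (Matrix.isUnit_det_of_right_inverse (B := -(stdJ N)) (by rw [mul_neg, stdJ_mul_stdJ, neg_neg]))

lemma colI_tJ_colI (N : ℕ) : (colI N)ᵀ * stdJ N * (colI N) = 0 := by
  simp [colI, stdJ, transpose_fromRows, Matrix.fromCols_mul_fromBlocks,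
    Matrix.fromCols_mul_fromRows]

lemma symplectic_isUnit {W : Matrix (Fin N ⊕ Fin N) (Fin N ⊕ Fin N) ℝ}
    (hW : Wᵀ * stdJ N * W = stdJ N) : IsUnit W := by
  rw [Matrix.isUnit_iff_isUnit_det, isUnit_iff_ne_zero]
  have hdJ : (stdJ N).det ≠ 0 := ((Matrix.isUnit_iff_isUnit_det _).mp (stdJ_isUnit N)).ne_zero
  intro h0
  have := congrArg Matrix.det hW
  rw [Matrix.det_mul, Matrix.det_mul, Matrix.det_transpose, h0] at this
  simp at this
  exact hdJ this.symm
end aux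

section bwd
variable {N : ℕ}

lemma colI_mulVec_inj : Function.Injective (colI N).mulVec := by
  intro u v h
  funext i
  have := congrFun h (Sum.inl i)
  simpa [colI, Matrix.fromRows_mulVec] using this

lemma jw_inv {W : Matrix (Fin N ⊕ Fin N) (Fin N ⊕ Fin N) ℝ}
    (hW : Wᵀ * stdJ N * W = stdJ N) : stdJ N * W⁻¹ = Wᵀ * stdJ N := by
  have hu : IsUnit W.det := (Matrix.isUnit_iff_isUnit_det W).mp (symplectic_isUnit hW)
  calc stdJ N * W⁻¹ = (Wᵀ * stdJ N * W) * W⁻¹ := by rw [hW]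
    _ = Wᵀ * stdJ N * (W * W⁻¹) := by rw [mul_assoc]
    _ = Wᵀ * stdJ N := by rw [Matrix.mul_nonsing_inv _ hu, mul_one]

lemma bwd_dir {N : ℕ} (H : Matrix (Fin N ⊕ Fin N) (Fin N ⊕ Fin N) ℝ)
    (W : Matrix (Fin N ⊕ Fin N) (Fin N ⊕ Fin N) ℝ) (R D : Matrix (Fin N) (Fin N) ℝ)
    (hW : Wᵀ * stdJ N * W = stdJ N) (htri : W⁻¹ * H * W = Matrix.fromBlocks R D 0 (-Rᵀ)) :
    Module.finrank ℝ (LinearMap.range (Matrix.mulVecLin (W * colI N))) = N ∧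
    (∀ x ∈ LinearMap.range (Matrix.mulVecLin (W * colI N)),
      ∀ y ∈ LinearMap.range (Matrix.mulVecLin (W * colI N)), x ⬝ᵥ (stdJ N *ᵥ y) = 0) ∧
    (∀ x ∈ LinearMap.range (Matrix.mulVecLin (W * colI N)),
      H *ᵥ x ∈ LinearMap.range (Matrix.mulVecLin (W * colI N))) := by
  have hu : IsUnit W.det := (Matrix.isUnit_iff_isUnit_det W).mp (symplectic_isUnit hW)
  set M := W * colI N with hM
  have hMinj : Function.Injective M.mulVecLin := by
    intro u v h
    simp only [Matrix.mulVecLin_apply, hM, ← Matrix.mulVec_mulVec] at h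
    exact colI_mulVec_inj ((Matrix.mulVec_injective_iff_isUnit.2 (symplectic_isUnit hW)) h)
  constructor
  · rw [LinearMap.finrank_range_of_inj hMinj]
    simp
  have hMJM : Mᵀ * stdJ N * M = 0 := by
    rw [hM, Matrix.transpose_mul]
    calc (colI N)ᵀ * Wᵀ * stdJ N * (W * colI N)
        = (colI N)ᵀ * (Wᵀ * stdJ N * W) * colI N := by
          simp only [Matrix.mul_assoc]
      _ = 0 := by rw [hW, colI_tJ_colI]
  constructor
  · rintro x ⟨u, rfl⟩ y ⟨v, rfl⟩
    simp only [Matrix.mulVecLin_apply]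
    rw [Matrix.mulVec_mulVec, Matrix.dotProduct_mulVec, ← Matrix.vecMul_transpose,
      Matrix.vecMul_vecMul, ← Matrix.mul_assoc, hMJM]
    simp
  · rintro x ⟨u, rfl⟩
    refine ⟨R *ᵥ u, ?_⟩
    simp only [Matrix.mulVecLin_apply]
    rw [Matrix.mulVec_mulVec, Matrix.mulVec_mulVec]
    have hHM : H * M = M * R := by
      have h1 : H * W = W * Matrix.fromBlocks R D 0 (-Rᵀ) := by
        rw [← htri]
        rw [← Matrix.mul_assoc, ← Matrix.mul_assoc, Matrix.mul_nonsing_inv _ hu, one_mul]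
      have h2 : Matrix.fromBlocks R D 0 (-Rᵀ) * colI N = colI N * R := by
        simp [colI, Matrix.fromBlocks_mul_fromRows, Matrix.fromRows_mul]
      rw [hM, ← Matrix.mul_assoc, h1, Matrix.mul_assoc, h2, Matrix.mul_assoc]
    rw [hHM]
end bwd

section fwd
variable {N : ℕ}

lemma gram_posDef (X : Matrix (Fin N ⊕ Fin N) (Fin N) ℝ)
    (hinj : Function.Injective X.mulVec) : (Xᵀ * X).PosDef := by
  refine Matrix.PosDef.of_dotProduct_mulVec_pos ?_ ?_
  · show (Xᵀ * X)ᴴ = Xᵀ * X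
    ext i j
    simp [Matrix.conjTranspose_apply, Matrix.mul_apply, Matrix.transpose_apply, mul_comm]
  · intro x hx
    have hx' : X *ᵥ x ≠ 0 := fun h => hx (hinj (by rw [h, Matrix.mulVec_zero]))
    have : star x ⬝ᵥ ((Xᵀ * X) *ᵥ x) = (X *ᵥ x) ⬝ᵥ (X *ᵥ x) := by
      rw [show (star x : Fin N → ℝ) = x from funext fun i => rfl,
        ← Matrix.mulVec_mulVec, Matrix.dotProduct_mulVec, Matrix.vecMul_transpose]
    rw [this]
    have h0 : (0:ℝ) ≤ (X *ᵥ x) ⬝ᵥ (X *ᵥ x) := Finset.sum_nonneg fun i _ => mul_self_nonneg _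
    rcases h0.lt_or_eq with h | h
    · exact h
    · exact absurd ((dotProduct_self_eq_zero).mp h.symm) hx'

lemma symplectic_extension (X : Matrix (Fin N ⊕ Fin N) (Fin N) ℝ)
    (hinj : Function.Injective X.mulVec) (hXJX : Xᵀ * stdJ N * X = 0) :
    ∃ W : Matrix (Fin N ⊕ Fin N) (Fin N ⊕ Fin N) ℝ,
      Wᵀ * stdJ N * W = stdJ N ∧ W * colI N = X := by
  set G := Xᵀ * X with hG
  have hGpd := gram_posDef X hinj
  have hGu : IsUnit G.det := (Matrix.isUnit_iff_isUnit_det _).mp hGpd.isUnit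
  have hGG : G * G⁻¹ = 1 := Matrix.mul_nonsing_inv _ hGu
  have hGiG : G⁻¹ * G = 1 := Matrix.nonsing_inv_mul _ hGu
  have hGt : Gᵀ = G := by rw [hG, Matrix.transpose_mul, Matrix.transpose_transpose]
  set Y := -(stdJ N) * X * G⁻¹ with hY
  have hYt : Yᵀ = G⁻¹ * Xᵀ * stdJ N := by
    rw [hY, Matrix.transpose_mul, Matrix.transpose_mul, Matrix.transpose_neg, stdJ_transpose,
      Matrix.transpose_nonsing_inv, hGt, neg_neg, Matrix.mul_assoc]
  refine ⟨fromCols X Y, ?_, ?_⟩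
  · have hXJY : Xᵀ * (stdJ N * Y) = 1 := by
      rw [hY]
      calc Xᵀ * (stdJ N * (-(stdJ N) * X * G⁻¹))
          = -(Xᵀ * ((stdJ N * stdJ N) * X * G⁻¹)) := by
            simp only [Matrix.mul_neg, Matrix.neg_mul, Matrix.mul_assoc]
        _ = Xᵀ * X * G⁻¹ := by rw [stdJ_mul_stdJ]; simp [Matrix.mul_assoc]
        _ = 1 := by rw [← hG, hGG]
    have hYJX : Yᵀ * (stdJ N * X) = -1 := by
      rw [hYt]
      calc G⁻¹ * Xᵀ * stdJ N * (stdJ N * X)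
          = G⁻¹ * (Xᵀ * ((stdJ N * stdJ N) * X)) := by simp only [Matrix.mul_assoc]
        _ = -(G⁻¹ * (Xᵀ * X)) := by rw [stdJ_mul_stdJ]; simp
        _ = -1 := by rw [← hG, hGiG]
    have hYJY : Yᵀ * (stdJ N * Y) = 0 := by
      rw [hYt, hY]
      calc G⁻¹ * Xᵀ * stdJ N * (stdJ N * (-(stdJ N) * X * G⁻¹))
          = -(G⁻¹ * (Xᵀ * ((stdJ N * stdJ N) * (stdJ N * X * G⁻¹)))) := by
            simp only [Matrix.mul_neg, Matrix.neg_mul, Matrix.mul_assoc]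
        _ = G⁻¹ * (Xᵀ * (stdJ N * X * G⁻¹)) := by rw [stdJ_mul_stdJ]; simp [Matrix.mul_assoc]
        _ = G⁻¹ * (Xᵀ * stdJ N * X) * G⁻¹ := by simp only [Matrix.mul_assoc]
        _ = 0 := by rw [hXJX]; simp
    have hXJX' : Xᵀ * (stdJ N * X) = 0 := by rw [← Matrix.mul_assoc, hXJX]
    rw [transpose_fromCols, Matrix.mul_assoc, Matrix.mul_fromCols,
      Matrix.fromRows_mul_fromCols, hXJX', hXJY, hYJX, hYJY, stdJ]
  · rw [colI, Matrix.fromCols_mul_fromRows]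
    simp

end fwd

section fwd2
variable {N : ℕ}

lemma exists_basis_matrix (L : Submodule ℝ (Fin N ⊕ Fin N → ℝ))
    (hrank : Module.finrank ℝ L = N) :
    ∃ X : Matrix (Fin N ⊕ Fin N) (Fin N) ℝ,
      Function.Injective X.mulVec ∧ LinearMap.range X.mulVecLin = L := by
  let b : Module.Basis (Fin N) ℝ L := Module.finBasisOfFinrankEq ℝ L hrank
  set X : Matrix (Fin N ⊕ Fin N) (Fin N) ℝ := Matrix.of (fun i j => (b j : Fin N ⊕ Fin N → ℝ) i)
    with hX
  have hXv : ∀ u : Fin N → ℝ, X *ᵥ u = ∑ j, u j • (b j : Fin N ⊕ Fin N → ℝ) := by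
    intro u
    funext i
    simp [hX, Matrix.mulVec, dotProduct, Finset.sum_apply, mul_comm]
  have hli : LinearIndependent ℝ (fun j => (b j : Fin N ⊕ Fin N → ℝ)) :=
    b.linearIndependent.map' L.subtype L.ker_subtype
  refine ⟨X, ?_, ?_⟩
  · intro u v h
    have h0 : X *ᵥ (u - v) = 0 := by
      rw [Matrix.mulVec_sub, h, sub_self]
    rw [hXv] at h0
    have := linearIndependent_iff'.mp hli Finset.univ (u - v) (by simpa using h0)
    funext i
    have := this i (Finset.mem_univ i)
    simpa [sub_eq_zero] using this
  · apply le_antisymm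
    · rintro x ⟨u, rfl⟩
      rw [Matrix.mulVecLin_apply, hXv]
      exact Submodule.sum_mem _ fun j _ => Submodule.smul_mem _ _ (b j).2
    · intro x hx
      refine ⟨b.repr ⟨x, hx⟩, ?_⟩
      rw [Matrix.mulVecLin_apply, hXv]
      have := b.sum_repr ⟨x, hx⟩
      calc ∑ j, (b.repr ⟨x, hx⟩) j • (b j : Fin N ⊕ Fin N → ℝ)
          = ((∑ j, (b.repr ⟨x, hx⟩) j • b j : L) : Fin N ⊕ Fin N → ℝ) := by
            push_cast; rfl
        _ = x := by rw [this]
end fwd2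

section fwd3
variable {N : ℕ}

lemma mul_colI_apply (K : Matrix (Fin N ⊕ Fin N) (Fin N ⊕ Fin N) ℝ) (a : Fin N ⊕ Fin N)
    (j : Fin N) : (K * colI N) a j = K a (Sum.inl j) := by
  simp [colI, Matrix.mul_apply, Fintype.sum_sum_type, Matrix.one_apply]

lemma colI_mul_inl (Rm : Matrix (Fin N) (Fin N) ℝ) (i j : Fin N) :
    (colI N * Rm) (Sum.inl i) j = Rm i j := by
  simp [colI, Matrix.mul_apply, Matrix.one_apply]

lemma colI_mul_inr (Rm : Matrix (Fin N) (Fin N) ℝ) (i j : Fin N) :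
    (colI N * Rm) (Sum.inr i) j = 0 := by
  simp [colI, Matrix.mul_apply]

lemma JK_inl (K : Matrix (Fin N ⊕ Fin N) (Fin N ⊕ Fin N) ℝ) (a : Fin N) (b : Fin N ⊕ Fin N) :
    (stdJ N * K) (Sum.inl a) b = K (Sum.inr a) b := by
  simp [stdJ, Matrix.mul_apply, Fintype.sum_sum_type, Matrix.one_apply]

lemma JK_inr (K : Matrix (Fin N ⊕ Fin N) (Fin N ⊕ Fin N) ℝ) (a : Fin N) (b : Fin N ⊕ Fin N) :
    (stdJ N * K) (Sum.inr a) b = -(K (Sum.inl a) b) := by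
  simp [stdJ, Matrix.mul_apply, Fintype.sum_sum_type, Matrix.one_apply]

lemma block_structure (K : Matrix (Fin N ⊕ Fin N) (Fin N ⊕ Fin N) ℝ)
    (Rm : Matrix (Fin N) (Fin N) ℝ)
    (hK1 : K * colI N = colI N * Rm) (hsym : (stdJ N * K)ᵀ = stdJ N * K) :
    K = Matrix.fromBlocks K.toBlocks₁₁ K.toBlocks₁₂ 0 (-(K.toBlocks₁₁)ᵀ) := by
  ext a b
  cases a with
  | inl i =>
    cases b with
    | inl j => simp [Matrix.toBlocks₁₁]
    | inr j => simp [Matrix.toBlocks₁₂]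
  | inr i =>
    cases b with
    | inl j =>
      have := congrFun (congrFun hK1 (Sum.inr i)) j
      rw [mul_colI_apply, colI_mul_inr] at this
      simpa using this
    | inr j =>
      have := congrFun (congrFun hsym (Sum.inr j)) (Sum.inl i)
      rw [Matrix.transpose_apply, JK_inl, JK_inr] at this
      simp only [Matrix.fromBlocks_apply₂₂, Matrix.neg_apply, Matrix.transpose_apply,
        Matrix.toBlocks₁₁, Matrix.of_apply]
      linarith
end fwd3


/-- For a Hamiltonian matrix `H`, a subspace `L` is a Lagrangian invariant subspace of `H`
if and only if there is a symplectic matrix `W` whose first `N` columns span `L` and with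
`W⁻¹ H W` in Hamiltonian block triangular form `[[R, D], [0, -Rᵀ]]`. -/
theorem lagrangian_invariant_iff_block_triangular {N : ℕ}
    (H : Matrix (Fin N ⊕ Fin N) (Fin N ⊕ Fin N) ℝ)
    (hH : (stdJ N * H)ᵀ = stdJ N * H)
    (L : Submodule ℝ (Fin N ⊕ Fin N → ℝ)) :
    (Module.finrank ℝ L = N ∧ (∀ x ∈ L, ∀ y ∈ L, x ⬝ᵥ (stdJ N *ᵥ y) = 0) ∧
      (∀ x ∈ L, H *ᵥ x ∈ L)) ↔
    (∃ (W : Matrix (Fin N ⊕ Fin N) (Fin N ⊕ Fin N) ℝ) (R D : Matrix (Fin N) (Fin N) ℝ),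
      Wᵀ * stdJ N * W = stdJ N ∧
      LinearMap.range (Matrix.mulVecLin (W * colI N)) = L ∧
      W⁻¹ * H * W = Matrix.fromBlocks R D 0 (-Rᵀ)) := by
  constructor
  · rintro ⟨hrank, hlag, hinv⟩
    obtain ⟨X, hXinj, hXrange⟩ := exists_basis_matrix L hrank
    have hmem : ∀ u, X *ᵥ u ∈ L := fun u => hXrange ▸ ⟨u, rfl⟩
    have hcol : ∀ j, Xᵀ j ∈ L := fun j => by
      have := hmem (Pi.single j 1); rw [Matrix.mulVec_single_one] at this; exact this
    have hXJX : Xᵀ * stdJ N * X = 0 := by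
      ext i j
      have h := hlag (Xᵀ i) (hcol i) (Xᵀ j) (hcol j)
      rw [Matrix.mul_assoc]
      simp only [Matrix.mul_apply, Matrix.zero_apply, Matrix.transpose_apply]
      simpa [dotProduct, Matrix.mulVec, Matrix.mul_apply,
        Matrix.transpose_apply] using h
    obtain ⟨W, hWsymp, hWcol⟩ := symplectic_extension X hXinj hXJX
    have hu : IsUnit W.det := (Matrix.isUnit_iff_isUnit_det W).mp (symplectic_isUnit hWsymp)
    have hHX : ∀ j, ∃ u, X *ᵥ u = H *ᵥ Xᵀ j := by
      intro j
      have h := hinv (Xᵀ j) (hcol j)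
      rw [← hXrange] at h
      obtain ⟨u, hu⟩ := h
      exact ⟨u, hu⟩
    choose r hr using hHX
    set Rm : Matrix (Fin N) (Fin N) ℝ := Matrix.of (fun i j => r j i) with hRm
    have hHXR : H * X = X * Rm := by
      ext i j
      have h := congrFun (hr j) i
      simp only [Matrix.mulVec, dotProduct, Matrix.transpose_apply] at h
      simp only [Matrix.mul_apply, hRm, Matrix.of_apply]
      exact h.symm
    set K := W⁻¹ * H * W with hK
    have hK1 : K * colI N = colI N * Rm := by
      calc K * colI N = W⁻¹ * (H * (W * colI N)) := by simp only [hK, Matrix.mul_assoc]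
        _ = W⁻¹ * (X * Rm) := by rw [hWcol, hHXR]
        _ = W⁻¹ * (W * (colI N * Rm)) := by rw [← hWcol]; simp only [Matrix.mul_assoc]
        _ = colI N * Rm := by rw [← Matrix.mul_assoc, Matrix.nonsing_inv_mul _ hu, Matrix.one_mul]
    have hsym : (stdJ N * K)ᵀ = stdJ N * K := by
      have hJK : stdJ N * K = Wᵀ * (stdJ N * H) * W := by
        calc stdJ N * K = (stdJ N * W⁻¹) * (H * W) := by simp only [hK, Matrix.mul_assoc]
          _ = Wᵀ * stdJ N * (H * W) := by rw [jw_inv hWsymp]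
          _ = Wᵀ * (stdJ N * H) * W := by simp only [Matrix.mul_assoc]
      rw [hJK, Matrix.transpose_mul, Matrix.transpose_mul, Matrix.transpose_transpose, hH]
      simp only [Matrix.mul_assoc]
    refine ⟨W, K.toBlocks₁₁, K.toBlocks₁₂, hWsymp, by rw [hWcol]; exact hXrange, ?_⟩
    exact block_structure K Rm hK1 hsym
  · rintro ⟨W, R, D, hWsymp, hrange, htri⟩
    have h := bwd_dir H W R D hWsymp htri
    rw [hrange] at h
    exact h
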